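/- Let s₀ < s₁ with W := γ'(s₀) ∧ γ'(s₁) > 0, and suppose the tangent lines to the curve at γ(s₀) and γ(s₁) meet at the point P, i.e. P = γ(s₀) + t γ'(s₀) = γ(s₁) + u γ'(s₁) with t > 0 > u. Then |P − γ(s₀)| + |P − γ(s₁)| = ((γ(s₁) − γ(s₀)) ∧ (γ'(s₁) − γ'(s₀))) / W; that is, the generating function H(s₀,s₁) of the outer length billiard equals the sum of the two tangent-segment lengths from P. -/

import Mathlib

noncomputable section

/-- Planar cross product (wedge) of two vectors in `ℝ × ℝ`. -/
def wedge (u v : ℝ × ℝ) : ℝ := u.1 * v.2 - u.2 * v.1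

/-- Euclidean dot product in `ℝ × ℝ`. -/
def dotp (u v : ℝ × ℝ) : ℝ := u.1 * v.1 + u.2 * v.2

/-- Euclidean norm in `ℝ × ℝ`. -/
def enorm2 (u : ℝ × ℝ) : ℝ := Real.sqrt (u.1 ^ 2 + u.2 ^ 2)

/-- The generating function of the outer length billiard equals the sum of tangent-segment
lengths: if the tangent lines at `γ(s₀)` and `γ(s₁)` meet at `P = γ(s₀) + tγ'(s₀)
= γ(s₁) + uγ'(s₁)` with `t > 0 > u`, then
`|P-γ(s₀)| + |P-γ(s₁)| = ((γ(s₁)-γ(s₀)) ∧ (γ'(s₁)-γ'(s₀))) / (γ'(s₀) ∧ γ'(s₁))`. -/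
theorem generating_function_equals_tangent_lengths
    (ℓ : ℝ) (hℓ : 0 < ℓ) (γ : ℝ → ℝ × ℝ)
    (hγ : ContDiff ℝ (⊤ : ℕ∞) γ) (hper : ∀ s, γ (s + ℓ) = γ s)
    (hunit : ∀ s, dotp (deriv γ s) (deriv γ s) = 1)
    (s₀ s₁ : ℝ) (hlt : s₀ < s₁)
    (hW : 0 < wedge (deriv γ s₀) (deriv γ s₁))
    (P : ℝ × ℝ) (t u : ℝ) (ht : 0 < t) (hu : u < 0)
    (hPt : P = γ s₀ + t • deriv γ s₀) (hPu : P = γ s₁ + u • deriv γ s₁) :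
    enorm2 (P - γ s₀) + enorm2 (P - γ s₁) =
      wedge (γ s₁ - γ s₀) (deriv γ s₁ - deriv γ s₀) / wedge (deriv γ s₀) (deriv γ s₁) := by
  set v0 := deriv γ s₀ with hv0
  set v1 := deriv γ s₁ with hv1
  have h0 : v0.1 ^ 2 + v0.2 ^ 2 = 1 := by
    have := hunit s₀; simp only [dotp, ← hv0] at this; nlinarith
  have h1 : v1.1 ^ 2 + v1.2 ^ 2 = 1 := by
    have := hunit s₁; simp only [dotp, ← hv1] at this; nlinarith
  have e0 : P - γ s₀ = t • v0 := by rw [hPt]; abel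
  have e1 : P - γ s₁ = u • v1 := by rw [hPu]; abel
  have n0 : enorm2 (P - γ s₀) = t := by
    rw [e0]
    simp only [enorm2, Prod.smul_fst, Prod.smul_snd, smul_eq_mul]
    rw [show (t * v0.1) ^ 2 + (t * v0.2) ^ 2 = t ^ 2 * (v0.1 ^ 2 + v0.2 ^ 2) by ring,
      h0, mul_one, Real.sqrt_sq ht.le]
  have n1 : enorm2 (P - γ s₁) = -u := by
    rw [e1]
    simp only [enorm2, Prod.smul_fst, Prod.smul_snd, smul_eq_mul]
    rw [show (u * v1.1) ^ 2 + (u * v1.2) ^ 2 = (-u) ^ 2 * (v1.1 ^ 2 + v1.2 ^ 2) by ring,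
      h1, mul_one, Real.sqrt_sq (by linarith)]
  have hd : γ s₁ - γ s₀ = t • v0 - u • v1 := by
    have : γ s₀ + t • v0 = γ s₁ + u • v1 := by rw [← hPt, ← hPu]
    have h := this
    have : γ s₁ = γ s₀ + t • v0 - u • v1 := by rw [h]; abel
    rw [this]; abel
  rw [n0, n1, hd]
  have hWne : wedge v0 v1 ≠ 0 := ne_of_gt hW
  simp only [wedge, Prod.fst_sub, Prod.snd_sub, Prod.smul_fst, Prod.smul_snd,
    smul_eq_mul] at hWne ⊢
  rw [eq_div_iff hWne]
  ring
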